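/- Let ℓ ≥ 7 be an odd integer, s ≥ 0, k = (ℓ−3)/2, and n sufficiently large (e.g. n > 2(ℓ+s)). Then the graph H*(k,n), obtained from H(k,n) by adding one edge inside the part of size n−k, contains no subgraph isomorphic to the broom B(ℓ,s). -/

import Mathlib

open scoped Classical
open Finset SimpleGraph

/-- The broom `B(ℓ,s)`: a path on vertices `0,…,ℓ-1` plus `s` extra leaves
`ℓ,…,ℓ+s-1` attached to the penultimate vertex `ℓ-2` of the path. -/
def broom (ℓ s : ℕ) : SimpleGraph (Fin (ℓ + s)) :=
  SimpleGraph.fromRel (fun a b => (a.val + 1 = b.val ∧ b.val < ℓ) ∨ (a.val = ℓ - 2 ∧ ℓ ≤ b.val))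

/-- `G` contains no subgraph isomorphic to the broom `B(ℓ,s)`. -/
def BroomFree (ℓ s : ℕ) {V : Type*} (G : SimpleGraph V) : Prop :=
  ¬ ∃ f : broom ℓ s →g G, Function.Injective f

/-- `H(k,n)`: the complete bipartite graph `K_{k,n-k}` with all edges added inside
the part `{0,…,k-1}` of size `k`. -/
noncomputable def Hgraph (k n : ℕ) : SimpleGraph (Fin n) :=
  SimpleGraph.fromRel (fun a b => a.val < k ∨ b.val < k)

/-- `H*(k,n)`: `H(k,n)` together with one extra edge (between `k` and `k+1`) inside
the part of size `n-k`. -/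
noncomputable def HstarGraph (k n : ℕ) : SimpleGraph (Fin n) :=
  SimpleGraph.fromRel (fun a b => a.val < k ∨ b.val < k ∨ (a.val = k ∧ b.val = k + 1))

/-- For odd `ℓ ≥ 7`, `k = (ℓ-3)/2` and `n > 2(ℓ+s)`, the graph `H*(k,n)` is
`B(ℓ,s)`-free. -/
theorem HstarGraph_broomFree_odd (ℓ s k n : ℕ) (hℓ : 7 ≤ ℓ) (hodd : Odd ℓ)
    (hk : k = (ℓ - 3) / 2) (hn : 2 * (ℓ + s) < n) :
    BroomFree ℓ s (HstarGraph k n) := by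
  rintro ⟨f, hf⟩
  have pos : 0 < ℓ + s := by omega
  set Q : ℕ → Fin n := fun i => f ⟨i % (ℓ + s), Nat.mod_lt _ pos⟩ with hQ
  -- injectivity of Q on indices < ℓ
  have hQinj : ∀ i < ℓ, ∀ j < ℓ, Q i = Q j → i = j := by
    intro i hi j hj h
    have := hf h
    have h1 : i % (ℓ + s) = i := Nat.mod_eq_of_lt (by omega)
    have h2 : j % (ℓ + s) = j := Nat.mod_eq_of_lt (by omega)
    have := congrArg Fin.val this
    simpa [h1, h2] using this
  -- adjacency along the path
  have hQadj : ∀ i, i + 1 < ℓ → (HstarGraph k n).Adj (Q i) (Q (i + 1)) := by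
    intro i hi
    apply f.map_adj
    rw [broom, SimpleGraph.fromRel_adj]
    constructor
    · intro h
      have := congrArg Fin.val h
      simp only [Nat.mod_eq_of_lt (show i < ℓ + s by omega),
        Nat.mod_eq_of_lt (show i + 1 < ℓ + s by omega)] at this
      omega
    · left; left
      constructor
      · simp [Nat.mod_eq_of_lt (show i < ℓ + s by omega),
          Nat.mod_eq_of_lt (show i + 1 < ℓ + s by omega)]
      · simp [Nat.mod_eq_of_lt (show i + 1 < ℓ + s by omega)]; omega
  -- unfolded adjacency
  have hQadj' : ∀ i, i + 1 < ℓ →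
      (Q i).val < k ∨ (Q (i+1)).val < k ∨
      ((Q i).val = k ∧ (Q (i+1)).val = k + 1) ∨
      ((Q (i+1)).val = k ∧ (Q i).val = k + 1) := by
    intro i hi
    have h := hQadj i hi
    rw [HstarGraph, SimpleGraph.fromRel_adj] at h
    tauto
  -- the set of path indices landing in the clique part
  set S : Finset ℕ := (Finset.range ℓ).filter (fun i => (Q i).val < k) with hS
  have hScard : S.card ≤ k := by
    have : S.card ≤ (Finset.range k).card := by
      apply Finset.card_le_card_of_injOn (fun i => (Q i).val)
      · intro i hi
        simp only [hS, Finset.mem_coe, Finset.mem_filter, Finset.mem_range] at hi ⊢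
        exact hi.2
      · intro i hi j hj h
        simp only [hS, Finset.coe_filter, Set.mem_setOf_eq, Finset.mem_range] at hi hj
        exact hQinj i hi.1 j hj.1 (Fin.ext h)
    simpa using this
  -- bad pairs: both endpoints outside the clique part
  set Bad : Finset ℕ :=
    (Finset.range (ℓ - 1)).filter (fun i => k ≤ (Q i).val ∧ k ≤ (Q (i+1)).val) with hBadDef
  have hBadMem : ∀ i ∈ Bad,
      ((Q i).val = k ∧ (Q (i+1)).val = k + 1) ∨
      ((Q (i+1)).val = k ∧ (Q i).val = k + 1) := by
    intro i hi
    simp only [hBadDef, Finset.mem_filter, Finset.mem_range] at hi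
    have := hQadj' i (by omega)
    omega
  have hBadCard : Bad.card ≤ 1 := by
    apply Finset.card_le_one.2
    intro i hi j hj
    have hi' := hi; have hj' := hj
    simp only [hBadDef, Finset.mem_filter, Finset.mem_range] at hi' hj'
    have hvi := hBadMem i hi
    have hvj := hBadMem j hj
    have inj : ∀ a < ℓ, ∀ b < ℓ, (Q a).val = (Q b).val → a = b := by
      intro a ha b hb h
      exact hQinj a ha b hb (Fin.ext h)
    rcases hvi with ⟨h1, h2⟩ | ⟨h1, h2⟩ <;> rcases hvj with ⟨h3, h4⟩ | ⟨h3, h4⟩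
    · exact inj i (by omega) j (by omega) (by omega)
    · have e1 : i = j + 1 := inj i (by omega) (j+1) (by omega) (by omega)
      have e2 : i + 1 = j := inj (i+1) (by omega) j (by omega) (by omega)
      omega
    · have e1 : i + 1 = j := inj (i+1) (by omega) j (by omega) (by omega)
      have e2 : i = j + 1 := inj i (by omega) (j+1) (by omega) (by omega)
      omega
    · have := inj (i+1) (by omega) (j+1) (by omega) (by omega)
      omega
  -- the counting sum
  set ind : ℕ → ℕ := fun i => if (Q i).val < k then 1 else 0 with hind
  set T : ℕ := ∑ i ∈ Finset.range (ℓ - 1), (ind i + ind (i+1)) with hT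
  -- lower bound
  have hTlow : ℓ - 2 ≤ T := by
    have hsub : Bad ⊆ Finset.range (ℓ - 1) := Finset.filter_subset _ _
    have hcard : ℓ - 2 ≤ (Finset.range (ℓ - 1) \ Bad).card := by
      rw [Finset.card_sdiff_of_subset hsub]
      simp only [Finset.card_range]
      omega
    have hone : ∀ i ∈ Finset.range (ℓ - 1) \ Bad, 1 ≤ ind i + ind (i+1) := by
      intro i hi
      simp only [Finset.mem_sdiff, Finset.mem_range, hBadDef, Finset.mem_filter] at hi
      have : (Q i).val < k ∨ (Q (i+1)).val < k := by
        by_contra h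
        push_neg at h
        exact hi.2 ⟨hi.1, by omega, by omega⟩
      rcases this with h | h <;> simp [hind, h]
    calc ℓ - 2 ≤ (Finset.range (ℓ - 1) \ Bad).card := hcard
      _ = ∑ _i ∈ Finset.range (ℓ - 1) \ Bad, 1 := by simp
      _ ≤ ∑ i ∈ Finset.range (ℓ - 1) \ Bad, (ind i + ind (i+1)) :=
          Finset.sum_le_sum hone
      _ ≤ T := Finset.sum_le_sum_of_subset Finset.sdiff_subset
  -- upper bound
  have hTup : T ≤ 2 * k := by
    have hsplit : T = (∑ i ∈ Finset.range (ℓ - 1), ind i)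
        + ∑ i ∈ Finset.range (ℓ - 1), ind (i+1) := Finset.sum_add_distrib
    have h1 : (∑ i ∈ Finset.range (ℓ - 1), ind i) ≤ S.card := by
      rw [hS, Finset.card_filter]
      exact Finset.sum_le_sum_of_subset
        (Finset.range_subset_range.2 (by omega))
    have h2 : (∑ i ∈ Finset.range (ℓ - 1), ind (i+1)) ≤ S.card := by
      have : (∑ i ∈ Finset.range (ℓ - 1), ind (i+1))
          = ((Finset.range (ℓ - 1)).filter (fun i => (Q (i+1)).val < k)).card := by
        rw [Finset.card_filter]
      rw [this]
      apply Finset.card_le_card_of_injOn (fun i => i + 1)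
      · intro i hi
        simp only [Finset.mem_coe, Finset.mem_filter, Finset.mem_range] at hi
        simp only [hS, Finset.mem_coe, Finset.mem_filter, Finset.mem_range]
        exact ⟨by omega, hi.2⟩
      · intro a _ b _ h
        have h' : a + 1 = b + 1 := h
        omega
    omega
  -- conclude
  obtain ⟨m, hm⟩ := hodd
  have hfin : ℓ - 2 ≤ 2 * k := le_trans hTlow hTup
  omega
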